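/- With respect to the restriction of the ultrametric ρ to Y₀, the one-dimensional Hausdorff measure H¹ satisfies H¹(Y_n) = 1/R_n for every n ≥ 0 (where Y_0 = Y₀ and Y_n = {x ∈ Y₀ : x_n = 0 in ℤ/R_n ℤ} for n ≥ 1). Consequently the normalized Haar measure μ₀ on Y₀ (with μ₀(Y₀) = 1) coincides with one-dimensional Hausdorff measure on the Borel subsets of Y₀. -/

import Mathlib

open scoped Real
noncomputable section

/-- The partial products `R_0 = 1`, `R_l = r_1 r_2 ⋯ r_l`, for a sequence `r` of integers
(indexed here so that `r j` is the paper's `r_{j+1}`). -/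
def RR (r : ℕ → ℕ) (l : ℕ) : ℕ := ∏ j ∈ Finset.range l, r j
/-- `R_l` divides `R_{l+1}`. -/
lemma RR_dvd (r : ℕ → ℕ) (l : ℕ) : RR r l ∣ RR r (l + 1) :=
  ⟨r l, Finset.prod_range_succ r l⟩

/-- `X₀ = ∏_{l≥1} ℤ/R_l ℤ`; the coordinate indexed by `l : ℕ` here is the factor
`ℤ/R_{l+1} ℤ` (paper index `l+1`).  Each factor is discrete and `X₀` carries the product
topology. -/
abbrev X0R (r : ℕ → ℕ) := (l : ℕ) → ZMod (RR r (l + 1))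

/-- `x ∈ X₀` is a coherent sequence if `x l` is the image of `x (l+1)` under the natural
homomorphism `ℤ/R_{l+2}ℤ → ℤ/R_{l+1}ℤ`, for every `l`. -/
def Coherent0R (r : ℕ → ℕ) (x : X0R r) : Prop :=
  ∀ l, ZMod.castHom (RR_dvd r (l + 1)) (ZMod (RR r (l + 1))) (x (l + 1)) = x l

/-- `Y₀`, the set of coherent sequences, as an additive subgroup of `X₀`; it is a compact
abelian topological group. -/
def Y0RSub (r : ℕ → ℕ) : AddSubgroup (X0R r) where
  carrier := {x | Coherent0R r x}
  zero_mem' := fun l => by simp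
  add_mem' := fun hx hy l => by
    simp only [Pi.add_apply, map_add]
    rw [hx l, hy l]
  neg_mem' := fun hx l => by
    simp only [Pi.neg_apply, map_neg]
    rw [hx l]

/-- For `x ≠ y`, the (`0`-based) index of the first coordinate where `x` and `y` differ;
in the paper's (`1`-based) notation this is `l(x,y) - 1`. -/
def firstDiffR (r : ℕ → ℕ) (x y : X0R r) : ℕ := sInf {n | x n ≠ y n}

open Classical in
/-- The ultrametric `ρ(x,y) = 1/R_{l(x,y)-1}`, with `ρ(x,x) = 0`. -/
def rhoR (r : ℕ → ℕ) (x y : X0R r) : ℝ :=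
  if x = y then 0 else ((RR r (firstDiffR r x y) : ℝ))⁻¹

lemma RR_pos (r : ℕ → ℕ) (hr0 : ∀ j, 0 < r j) (l : ℕ) : 0 < RR r l :=
  Finset.prod_pos fun j _ => hr0 j

lemma RR_mono (r : ℕ → ℕ) (hr0 : ∀ j, 0 < r j) : Monotone (RR r) :=
  monotone_nat_of_le_succ fun l => by
    show (∏ j ∈ Finset.range l, r j) ≤ ∏ j ∈ Finset.range (l + 1), r j
    rw [Finset.prod_range_succ]
    exact Nat.le_mul_of_pos_right _ (hr0 l)

lemma rhoR_nonneg (r : ℕ → ℕ) (x y : X0R r) : 0 ≤ rhoR r x y := by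
  unfold rhoR
  split
  · exact le_refl 0
  · exact inv_nonneg.mpr (Nat.cast_nonneg _)

lemma firstDiffR_comm (r : ℕ → ℕ) (x y : X0R r) : firstDiffR r x y = firstDiffR r y x := by
  unfold firstDiffR
  congr 1
  ext n
  exact ne_comm

lemma rhoR_comm (r : ℕ → ℕ) (x y : X0R r) : rhoR r x y = rhoR r y x := by
  unfold rhoR
  rcases eq_or_ne x y with rfl | h
  · simp
  · rw [if_neg h, if_neg h.symm, firstDiffR_comm]

lemma rhoR_ultra (r : ℕ → ℕ) (hr0 : ∀ j, 0 < r j) (x y z : X0R r) :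
    rhoR r x z ≤ max (rhoR r x y) (rhoR r y z) := by
  rcases eq_or_ne x z with rfl | hxz
  · rw [rhoR, if_pos rfl]
    exact le_max_of_le_left (rhoR_nonneg r x y)
  rcases eq_or_ne x y with rfl | hxy
  · exact le_max_of_le_right le_rfl
  rcases eq_or_ne y z with rfl | hyz
  · exact le_max_of_le_left le_rfl
  have hmin : min (firstDiffR r x y) (firstDiffR r y z) ≤ firstDiffR r x z := by
    by_contra hlt
    push_neg at hlt
    have h1 : firstDiffR r x z < firstDiffR r x y := lt_of_lt_of_le hlt (min_le_left _ _)
    have h2 : firstDiffR r x z < firstDiffR r y z := lt_of_lt_of_le hlt (min_le_right _ _)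
    have hmem : x (firstDiffR r x z) ≠ z (firstDiffR r x z) := by
      have hne : {n | x n ≠ z n}.Nonempty := Function.ne_iff.mp hxz
      exact Nat.sInf_mem hne
    have hxy' : x (firstDiffR r x z) = y (firstDiffR r x z) := by
      have := Nat.notMem_of_lt_sInf h1
      simpa [firstDiffR] using this
    have hyz' : y (firstDiffR r x z) = z (firstDiffR r x z) := by
      have := Nat.notMem_of_lt_sInf h2
      simpa [firstDiffR] using this
    exact hmem (hxy'.trans hyz')
  rw [rhoR, if_neg hxz]
  rcases le_total (firstDiffR r x y) (firstDiffR r y z) with hle | hle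
  · apply le_max_of_le_left
    rw [rhoR, if_neg hxy]
    apply inv_anti₀
    · exact_mod_cast RR_pos r hr0 _
    · have : firstDiffR r x y ≤ firstDiffR r x z := min_eq_left hle ▸ hmin
      exact_mod_cast RR_mono r hr0 this
  · apply le_max_of_le_right
    rw [rhoR, if_neg hyz]
    apply inv_anti₀
    · exact_mod_cast RR_pos r hr0 _
    · have : firstDiffR r y z ≤ firstDiffR r x z := min_eq_right hle ▸ hmin
      exact_mod_cast RR_mono r hr0 this

/-- The ultrametric `ρ`, as a metric space structure on `X₀`. -/
def metricX0R (r : ℕ → ℕ) (hr0 : ∀ j, 0 < r j) : MetricSpace (X0R r) where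
  dist := rhoR r
  dist_self x := by
    show rhoR r x x = 0
    rw [rhoR, if_pos rfl]
  dist_comm := rhoR_comm r
  dist_triangle x y z :=
    le_trans (rhoR_ultra r hr0 x y z)
      (max_le_add_of_nonneg (rhoR_nonneg r x y) (rhoR_nonneg r y z))
  eq_of_dist_eq_zero := by
    intro x y h
    by_contra hne
    have h' : rhoR r x y = 0 := h
    rw [rhoR, if_neg hne] at h'
    have hpos : (0 : ℝ) < ((RR r (firstDiffR r x y) : ℝ))⁻¹ := by
      apply inv_pos.mpr
      exact_mod_cast RR_pos r hr0 _
    exact hpos.ne' h'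

/-- `Y₀` as a bare type (so that it can be equipped with the metric `ρ` below). -/
def Y0M (r : ℕ → ℕ) : Type := {x : X0R r // Coherent0R r x}

/-- The inclusion `Y₀ → X₀`. -/
def Y0Mval (r : ℕ → ℕ) : Y0M r → X0R r := Subtype.val

lemma Y0Mval_injective (r : ℕ → ℕ) : Function.Injective (Y0Mval r) :=
  Subtype.val_injective

/-- Addition on `Y₀` (coordinatewise; `Y₀` is a subgroup of `X₀`). -/
def Y0Madd (r : ℕ → ℕ) (g y : Y0M r) : Y0M r :=
  ⟨g.1 + y.1, (Y0RSub r).add_mem g.2 y.2⟩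

namespace Stmt15

open MeasureTheory Set
open scoped ENNReal

variable (r : ℕ → ℕ) [hF : Fact (∀ j, 2 ≤ r j)]

lemma hr2 (j : ℕ) : 2 ≤ r j := hF.out j

lemma hrpos : ∀ j, 0 < r j := fun j => lt_of_lt_of_le two_pos (hr2 r j)

lemma RRpos (l : ℕ) : 0 < RR r l := RR_pos r (hrpos r) l

instance instNeZeroRR (l : ℕ) : NeZero (RR r l) := ⟨(RRpos r l).ne'⟩

lemma RR_strictMono : StrictMono (RR r) := by
  apply strictMono_nat_of_lt_succ
  intro l
  have : RR r (l + 1) = RR r l * r l := Finset.prod_range_succ r l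
  rw [this]
  calc RR r l = RR r l * 1 := (mul_one _).symm
  _ < RR r l * r l :=
      mul_lt_mul_of_pos_left (lt_of_lt_of_le one_lt_two (hr2 r l)) (RRpos r l)

lemma two_pow_le_RR (l : ℕ) : 2 ^ l ≤ RR r l := by
  induction l with
  | zero => simp [RR]
  | succ l ih =>
      have : RR r (l + 1) = RR r l * r l := Finset.prod_range_succ r l
      rw [this, pow_succ]
      exact Nat.mul_le_mul ih (hr2 r l)

lemma RR_dvd_le {m n : ℕ} (h : m ≤ n) : RR r m ∣ RR r n :=
  Finset.prod_dvd_prod_of_subset _ _ r (Finset.range_subset_range.2 h)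

instance instMetricY : MetricSpace (Y0M r) :=
  MetricSpace.induced (Y0Mval r) (Y0Mval_injective r) (metricX0R r (hrpos r))

instance instMeasY : MeasurableSpace (Y0M r) := borel _

instance instBorelY : BorelSpace (Y0M r) := ⟨rfl⟩

lemma dist_def (x y : Y0M r) : dist x y = rhoR r x.1 y.1 := rfl

/-- coherence along any pair of indices -/
lemma coh_le (x : Y0M r) {m n : ℕ} (h : m ≤ n) :
    ZMod.castHom (RR_dvd_le r (Nat.succ_le_succ h)) (ZMod (RR r (m + 1))) (x.1 n) = x.1 m := by
  induction n with
  | zero =>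
      have hm : m = 0 := Nat.le_zero.1 h
      subst hm
      simp
  | succ n ih =>
      rcases Nat.lt_or_ge m (n + 1) with hm | hm
      · have hmn : m ≤ n := Nat.lt_succ_iff.1 hm
        have hcomp : ∀ a : ZMod (RR r (n + 2)),
            ZMod.castHom (RR_dvd_le r (Nat.succ_le_succ h)) (ZMod (RR r (m + 1))) a =
              ZMod.castHom (RR_dvd_le r (Nat.succ_le_succ hmn)) (ZMod (RR r (m + 1)))
                (ZMod.castHom (RR_dvd r (n + 1)) (ZMod (RR r (n + 1))) a) := by
          intro a
          rw [← RingHom.comp_apply, ZMod.castHom_comp]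
        rw [hcomp (x.1 (n + 1)), x.2 n]
        exact ih hmn
      · have hm' : m = n + 1 := le_antisymm h hm
        subst hm'
        simp

lemma agree_of_le (x y : Y0M r) {m n : ℕ} (h : m ≤ n) (hxy : x.1 n = y.1 n) :
    x.1 m = y.1 m := by
  rw [← coh_le r x h, ← coh_le r y h, hxy]

lemma subtype_ne (x y : Y0M r) (h : x ≠ y) : x.1 ≠ y.1 :=
  fun hh => h (Subtype.ext hh)

lemma firstDiff_mem (x y : Y0M r) (h : x ≠ y) :
    x.1 (firstDiffR r x.1 y.1) ≠ y.1 (firstDiffR r x.1 y.1) := by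
  have hne : {n | x.1 n ≠ y.1 n}.Nonempty := Function.ne_iff.mp (subtype_ne r x y h)
  exact Nat.sInf_mem hne

lemma dist_eq_of_ne (x y : Y0M r) (h : x ≠ y) :
    dist x y = ((RR r (firstDiffR r x.1 y.1) : ℝ))⁻¹ := by
  rw [dist_def, rhoR, if_neg (subtype_ne r x y h)]

lemma dist_le_inv_iff (x y : Y0M r) (n : ℕ) :
    dist x y ≤ ((RR r (n + 1) : ℝ))⁻¹ ↔ x.1 n = y.1 n := by
  rcases eq_or_ne x y with rfl | h
  · simp only [dist_self, iff_true_intro rfl, iff_true]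
    positivity
  · rw [dist_eq_of_ne r x y h]
    have hRpos : ∀ l, (0:ℝ) < (RR r l : ℝ) := fun l => by exact_mod_cast RRpos r l
    rw [inv_le_inv₀ (hRpos _) (hRpos _)]
    have hcast : ((RR r (n+1) : ℝ)) ≤ (RR r (firstDiffR r x.1 y.1) : ℝ) ↔
        RR r (n+1) ≤ RR r (firstDiffR r x.1 y.1) := by exact_mod_cast Iff.rfl
    rw [hcast, (RR_strictMono r).le_iff_le]
    constructor
    · intro hle
      have : n < firstDiffR r x.1 y.1 := hle
      have hnot : n ∉ {k | x.1 k ≠ y.1 k} := Nat.notMem_of_lt_sInf this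
      simpa using hnot
    · intro hagree
      by_contra hlt
      push_neg at hlt
      have hle : firstDiffR r x.1 y.1 ≤ n := Nat.lt_succ_iff.1 hlt
      exact firstDiff_mem r x y h (agree_of_le r x y hle hagree)

lemma inv_le_dist (x y : Y0M r) (n : ℕ) (h : x.1 n ≠ y.1 n) :
    ((RR r n : ℝ))⁻¹ ≤ dist x y := by
  have hxy : x ≠ y := fun hh => h (by rw [hh])
  rw [dist_eq_of_ne r x y hxy]
  have hRpos : ∀ l, (0:ℝ) < (RR r l : ℝ) := fun l => by exact_mod_cast RRpos r l
  rw [inv_le_inv₀ (hRpos _) (hRpos _)]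
  have hle : firstDiffR r x.1 y.1 ≤ n := Nat.sInf_le h
  exact_mod_cast (RR_strictMono r).monotone hle

/-- distances have discrete values: a distance below `1/R_k` is at most `1/R_{k+1}` -/
lemma dist_discrete (x y : Y0M r) (k : ℕ) (h : dist x y < ((RR r k : ℝ))⁻¹) :
    dist x y ≤ ((RR r (k + 1) : ℝ))⁻¹ := by
  rcases eq_or_ne x y with rfl | hxy
  · simp only [dist_self]; positivity
  · rw [dist_eq_of_ne r x y hxy] at h ⊢
    have hRpos : ∀ l, (0:ℝ) < (RR r l : ℝ) := fun l => by exact_mod_cast RRpos r l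
    rw [inv_le_inv₀ (hRpos _) (hRpos _)]
    rw [inv_lt_inv₀ (hRpos _) (hRpos _)] at h
    have hlt : RR r k < RR r (firstDiffR r x.1 y.1) := by exact_mod_cast h
    have : k < firstDiffR r x.1 y.1 := (RR_strictMono r).lt_iff_lt.1 hlt
    exact_mod_cast (RR_strictMono r).monotone this

/-! ### edist versions -/

lemma eRR_eq (l : ℕ) : ((RR r l : ℝ≥0∞))⁻¹ = ENNReal.ofReal ((RR r l : ℝ))⁻¹ := by
  rw [ENNReal.ofReal_inv_of_pos (by exact_mod_cast RRpos r l)]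
  congr 1
  exact (ENNReal.ofReal_natCast _).symm

lemma edist_le_inv_iff (x y : Y0M r) (n : ℕ) :
    edist x y ≤ ((RR r (n + 1) : ℝ≥0∞))⁻¹ ↔ x.1 n = y.1 n := by
  rw [eRR_eq, edist_dist,
    ENNReal.ofReal_le_ofReal_iff (by positivity)]
  exact dist_le_inv_iff r x y n

/-! ### cylinders -/

/-- The cylinder `{x : Y₀ | x n = a}`. -/
def cyl (n : ℕ) (a : ZMod (RR r (n + 1))) : Set (Y0M r) := {x : Y0M r | x.1 n = a}

lemma isOpen_cyl (n : ℕ) (a : ZMod (RR r (n + 1))) : IsOpen (cyl r n a) := by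
  rw [Metric.isOpen_iff]
  intro x hx
  refine ⟨((RR r (n + 1) : ℝ))⁻¹, inv_pos.mpr (by exact_mod_cast RRpos r (n + 1)), fun y hy => ?_⟩
  have : y.1 n = x.1 n := (dist_le_inv_iff r y x n).1 (le_of_lt hy)
  simpa [cyl, this] using hx

lemma measurableSet_cyl (n : ℕ) (a : ZMod (RR r (n + 1))) : MeasurableSet (cyl r n a) :=
  (isOpen_cyl r n a).measurableSet

lemma diam_cyl_le (n : ℕ) (a : ZMod (RR r (n + 1))) :
    EMetric.diam (cyl r n a) ≤ ((RR r (n + 1) : ℝ≥0∞))⁻¹ := by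
  apply EMetric.diam_le
  intro x hx y hy
  rw [edist_le_inv_iff]
  have hx' : x.1 n = a := hx
  have hy' : y.1 n = a := hy
  rw [hx', hy']

/-- the "constant" coherent sequence attached to a natural number -/
def constY (c : ℕ) : Y0M r :=
  ⟨fun l => (c : ZMod (RR r (l + 1))), fun l => by simp⟩

lemma exists_coord (n : ℕ) (a : ZMod (RR r (n + 1))) : ∃ g : Y0M r, g.1 n = a :=
  ⟨constY r a.val, ZMod.natCast_rightInverse a⟩

lemma cyl_nonempty (n : ℕ) (a : ZMod (RR r (n + 1))) : (cyl r n a).Nonempty := by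
  obtain ⟨g, hg⟩ := exists_coord r n a
  exact ⟨g, hg⟩

lemma iUnion_cyl (n : ℕ) : (⋃ a, cyl r n a) = (Set.univ : Set (Y0M r)) :=
  Set.eq_univ_of_forall fun x => Set.mem_iUnion.2 ⟨x.1 n, rfl⟩

lemma disjoint_cyl (n : ℕ) : Pairwise (Function.onFun Disjoint fun a => cyl r n a) := by
  intro a b hab
  rw [Function.onFun, Set.disjoint_left]
  intro x hxa hxb
  exact hab (hxa.symm.trans hxb)

lemma preimage_add_cyl (g : Y0M r) (n : ℕ) (a : ZMod (RR r (n + 1))) :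
    (fun y => Y0Madd r g y) ⁻¹' cyl r n a = cyl r n (a - g.1 n) := by
  ext y
  simp only [cyl, Set.mem_preimage, Set.mem_setOf_eq]
  constructor
  · intro h
    have : g.1 n + y.1 n = a := h
    rw [← this]; ring
  · intro h
    show g.1 n + y.1 n = a
    rw [h]; ring

/-! ### the group structure -/

instance instAddY : AddCommGroup (Y0M r) :=
  inferInstanceAs (AddCommGroup (Y0RSub r))

lemma add_def (g y : Y0M r) : g + y = Y0Madd r g y := rfl

lemma rhoR_add_left (g x y : X0R r) : rhoR r (g + x) (g + y) = rhoR r x y := by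
  rcases eq_or_ne x y with rfl | h
  · simp [rhoR]
  · have h' : g + x ≠ g + y := fun hh => h (by
      funext l
      have := congrFun hh l
      simpa using add_left_cancel this)
    rw [rhoR, rhoR, if_neg h', if_neg h]
    have hset : {n | (g + x) n ≠ (g + y) n} = {n | x n ≠ y n} := by
      apply Set.ext
      intro k
      simp only [Set.mem_setOf_eq, Pi.add_apply]
      constructor
      · intro hk hc; exact hk (by rw [hc])
      · intro hk hc; exact hk (add_left_cancel hc)
    unfold firstDiffR
    rw [hset]

lemma isometry_add_left (g : Y0M r) : Isometry (fun y => Y0Madd r g y) := by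
  apply Isometry.of_dist_eq
  intro x y
  show rhoR r (g.1 + x.1) (g.1 + y.1) = rhoR r x.1 y.1
  exact rhoR_add_left r g.1 x.1 y.1

/-- left translation as an isometric equivalence -/
def addLeftIso (g : Y0M r) : Y0M r ≃ᵢ Y0M r where
  toFun := fun y => Y0Madd r g y
  invFun := fun y => Y0Madd r (-g) y
  left_inv := fun y => Subtype.ext (neg_add_cancel_left g.1 y.1)
  right_inv := fun y => Subtype.ext (add_neg_cancel_left g.1 y.1)
  isometry_toFun := isometry_add_left r g

lemma isometry_neg : Isometry (fun y : Y0M r => -y) := by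
  apply Isometry.of_dist_eq
  intro x y
  show rhoR r (-x.1) (-y.1) = rhoR r x.1 y.1
  rcases eq_or_ne x.1 y.1 with h | h
  · rw [h]; simp [rhoR]
  · have h' : -x.1 ≠ -y.1 := fun hh => h (neg_injective hh)
    rw [rhoR, rhoR, if_neg h', if_neg h]
    have hset : {n | (-x.1) n ≠ (-y.1) n} = {n | x.1 n ≠ y.1 n} := by
      apply Set.ext
      intro k
      simp only [Set.mem_setOf_eq, Pi.neg_apply, ne_eq, neg_inj]
    unfold firstDiffR
    rw [hset]

instance instTopAddY : IsTopologicalAddGroup (Y0M r) := by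
  have hca : ContinuousAdd (Y0M r) := by
    constructor
    have hlip : LipschitzWith 1 (fun p : Y0M r × Y0M r => p.1 + p.2) := by
      apply LipschitzWith.of_dist_le_mul
      intro p q
      rw [NNReal.coe_one, one_mul]
      have h1 : dist (p.1 + p.2) (p.1 + q.2) = dist p.2 q.2 :=
        (isometry_add_left r p.1).dist_eq p.2 q.2
      have h2 : dist (p.1 + q.2) (q.1 + q.2) = dist p.1 q.1 := by
        rw [add_comm p.1 q.2, add_comm q.1 q.2]
        exact (isometry_add_left r q.2).dist_eq p.1 q.1
      have hu : dist (p.1 + p.2) (q.1 + q.2) ≤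
          max (dist (p.1 + p.2) (p.1 + q.2)) (dist (p.1 + q.2) (q.1 + q.2)) :=
        rhoR_ultra r (hrpos r) _ _ _
      rw [h1, h2] at hu
      refine le_trans hu ?_
      rw [Prod.dist_eq]
      exact max_le (le_max_right _ _) (le_max_left _ _)
    exact hlip.continuous
  have hcn : ContinuousNeg (Y0M r) := ⟨(isometry_neg r).continuous⟩
  exact ⟨⟩

/-! ### compactness via the digit space -/

/-- partial sums of a digit expansion -/
def phiAux (d : ∀ j : ℕ, ZMod (r j)) (l : ℕ) : ℕ :=
  ∑ j ∈ Finset.range (l + 1), (d j).val * RR r j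

/-- the coherent sequence attached to a digit expansion -/
def phi (d : ∀ j : ℕ, ZMod (r j)) : Y0M r :=
  ⟨fun l => ((phiAux r d l : ℕ) : ZMod (RR r (l + 1))), by
    intro l
    simp only [map_natCast]
    have h : phiAux r d (l + 1) = phiAux r d l + (d (l + 1)).val * RR r (l + 1) :=
      Finset.sum_range_succ _ _
    rw [h]
    push_cast
    rw [ZMod.natCast_self, mul_zero, add_zero]⟩

lemma RR_succ (l : ℕ) : RR r (l + 1) = RR r l * r l := Finset.prod_range_succ r l

lemma val_coh (y : Y0M r) (l : ℕ) : (y.1 l).val = (y.1 (l + 1)).val % RR r (l + 1) := by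
  haveI : NeZero (RR r (l + 1)) := instNeZeroRR r (l + 1)
  haveI : NeZero (RR r (l + 2)) := instNeZeroRR r (l + 2)
  have h := y.2 l
  rw [← h, ZMod.castHom_apply, ← ZMod.natCast_val, ZMod.val_natCast]

/-- the digit expansion of a coherent sequence -/
def digits (y : Y0M r) : ∀ j : ℕ, ZMod (r j)
  | 0 => (((y.1 0).val : ℕ) : ZMod (r 0))
  | (j + 1) => ((((y.1 (j + 1)).val / RR r (j + 1) : ℕ)) : ZMod (r (j + 1)))

lemma val_lt (y : Y0M r) (l : ℕ) : (y.1 l).val < RR r (l + 1) := by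
  haveI : NeZero (RR r (l + 1)) := instNeZeroRR r (l + 1)
  exact ZMod.val_lt _

lemma phiAux_digits (y : Y0M r) (l : ℕ) : phiAux r (digits r y) l = (y.1 l).val := by
  induction l with
  | zero =>
      have hlt : (y.1 0).val < r 0 := by
        have h := val_lt r y 0
        have he : RR r 1 = r 0 := by rw [RR_succ]; simp [RR]
        exact Nat.lt_of_lt_of_le h (Nat.le_of_eq he)
      haveI : NeZero (r 0) := ⟨(hrpos r 0).ne'⟩
      show ((((y.1 0).val : ℕ) : ZMod (r 0))).val * RR r 0 + 0 = (y.1 0).val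
      rw [ZMod.val_natCast, Nat.mod_eq_of_lt hlt]
      show (y.1 0).val * 1 + 0 = (y.1 0).val
      ring
  | succ l ih =>
      have h : phiAux r (digits r y) (l + 1) =
          phiAux r (digits r y) l + (digits r y (l + 1)).val * RR r (l + 1) :=
        Finset.sum_range_succ _ _
      rw [h, ih]
      haveI : NeZero (r (l + 1)) := ⟨(hrpos r (l + 1)).ne'⟩
      have hdiv : (y.1 (l + 1)).val / RR r (l + 1) < r (l + 1) := by
        rw [Nat.div_lt_iff_lt_mul (RRpos r (l + 1))]
        have h2 := val_lt r y (l + 1)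
        exact lt_of_lt_of_eq h2 (by rw [RR_succ r (l + 1), mul_comm])
      have hval : (digits r y (l + 1)).val = (y.1 (l + 1)).val / RR r (l + 1) := by
        show ((((y.1 (l + 1)).val / RR r (l + 1) : ℕ)) : ZMod (r (l + 1))).val = _
        rw [ZMod.val_natCast, Nat.mod_eq_of_lt hdiv]
      rw [hval, val_coh r y l, Nat.mod_add_div']

lemma phi_surjective : Function.Surjective (phi r) := by
  intro y
  refine ⟨digits r y, Subtype.ext (funext fun l => ?_)⟩
  haveI : NeZero (RR r (l + 1)) := instNeZeroRR r (l + 1)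
  show ((phiAux r (digits r y) l : ℕ) : ZMod (RR r (l + 1))) = y.1 l
  rw [phiAux_digits r y l]
  exact ZMod.natCast_rightInverse _

lemma exists_RR_inv_lt_real {ε : ℝ} (hε : 0 < ε) : ∃ n : ℕ, ((RR r (n + 1) : ℝ))⁻¹ < ε := by
  obtain ⟨n, hn⟩ : ∃ n : ℕ, ε⁻¹ < (2 : ℝ) ^ n := pow_unbounded_of_one_lt ε⁻¹ one_lt_two
  refine ⟨n, ?_⟩
  have h2 : (2 : ℝ) ^ n ≤ (RR r (n + 1) : ℝ) := by
    have hnat : 2 ^ n ≤ RR r (n + 1) :=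
      le_trans (Nat.pow_le_pow_right two_pos (Nat.le_succ n)) (two_pow_le_RR r (n + 1))
    exact_mod_cast hnat
  have hpos : (0 : ℝ) < (RR r (n + 1) : ℝ) := by exact_mod_cast RRpos r (n + 1)
  rw [inv_lt_comm₀ hpos hε]
  exact lt_of_lt_of_le hn h2

instance instCompactY : CompactSpace (Y0M r) := by
  letI tZ : ∀ j : ℕ, TopologicalSpace (ZMod (r j)) := fun _ => ⊥
  haveI dZ : ∀ j : ℕ, DiscreteTopology (ZMod (r j)) := fun j => ⟨rfl⟩
  haveI fZ : ∀ j : ℕ, Finite (ZMod (r j)) := fun j =>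
    @Finite.of_fintype _ (@ZMod.fintype (r j) ⟨(hrpos r j).ne'⟩)
  have hcont : Continuous (phi r) := by
    rw [continuous_iff_continuousAt]
    intro d
    rw [ContinuousAt, Metric.tendsto_nhds]
    intro ε hε
    obtain ⟨n, hn⟩ := exists_RR_inv_lt_real r hε
    have hV : (⋂ j ∈ Finset.range (n + 1),
        (fun e : ∀ j : ℕ, ZMod (r j) => e j) ⁻¹' ({d j} : Set (ZMod (r j)))) ∈ nhds d := by
      rw [Filter.biInter_finset_mem]
      intro j _
      exact ((continuous_apply j).isOpen_preimage _ (isOpen_discrete _)).mem_nhds rfl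
    filter_upwards [hV] with e he
    have hagree : (phi r e).1 n = (phi r d).1 n := by
      show ((phiAux r e n : ℕ) : ZMod (RR r (n + 1))) = ((phiAux r d n : ℕ) : ZMod (RR r (n + 1)))
      congr 1
      apply Finset.sum_congr rfl
      intro j hj
      have hje := Set.mem_iInter₂.1 he j hj
      rw [Set.mem_preimage, Set.mem_singleton_iff] at hje
      rw [hje]
    exact lt_of_le_of_lt ((dist_le_inv_iff r (phi r e) (phi r d) n).2 hagree) hn
  constructor
  rw [← Set.range_eq_univ.2 (phi_surjective r)]
  exact isCompact_range hcont

instance instNonemptyY : Nonempty (Y0M r) := ⟨constY r 0⟩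

/-! ### the Haar measure and the cylinder measure computation -/

/-- the whole space as a positive compact set -/
def K0 : TopologicalSpace.PositiveCompacts (Y0M r) :=
  ⟨⟨Set.univ, isCompact_univ⟩, by rw [interior_univ]; exact Set.univ_nonempty⟩

/-- normalized Haar measure on `Y₀` -/
def haarY : Measure (Y0M r) := Measure.addHaarMeasure (K0 r)

lemma haarY_univ : haarY r Set.univ = 1 :=
  Measure.addHaarMeasure_self (K₀ := K0 r)

lemma haarY_preimage (g : Y0M r) {E : Set (Y0M r)} (hE : MeasurableSet E) :
    haarY r ((fun y => Y0Madd r g y) ⁻¹' E) = haarY r E := by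
  have hmeas : Measurable (fun y : Y0M r => g + y) :=
    (isometry_add_left r g).continuous.measurable
  haveI : (haarY r).IsAddLeftInvariant :=
    Measure.isAddLeftInvariant_addHaarMeasure (K0 r)
  have hmap : Measure.map (fun y : Y0M r => g + y) (haarY r) = haarY r :=
    MeasureTheory.map_add_left_eq_self (haarY r) g
  calc haarY r ((fun y => Y0Madd r g y) ⁻¹' E)
      = Measure.map (fun y : Y0M r => g + y) (haarY r) E := (Measure.map_apply hmeas hE).symm
  _ = haarY r E := by rw [hmap]

lemma measure_cyl_eq (μ : Measure (Y0M r)) (h1 : μ Set.univ = 1)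
    (hinv : ∀ g : Y0M r, ∀ (n : ℕ) (a : ZMod (RR r (n + 1))),
      μ ((fun y => Y0Madd r g y) ⁻¹' cyl r n a) = μ (cyl r n a))
    (n : ℕ) (a : ZMod (RR r (n + 1))) :
    μ (cyl r n a) = ((RR r (n + 1) : ℝ≥0∞))⁻¹ := by
  haveI : NeZero (RR r (n + 1)) := instNeZeroRR r (n + 1)
  have hEq : ∀ b : ZMod (RR r (n + 1)), μ (cyl r n b) = μ (cyl r n a) := by
    intro b
    obtain ⟨g, hg⟩ := exists_coord r n (a - b)
    have h := hinv g n a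
    rw [preimage_add_cyl, hg] at h
    have hb : a - (a - b) = b := by ring
    rw [hb] at h
    exact h
  have hsum : (1 : ℝ≥0∞) = ∑' b : ZMod (RR r (n + 1)), μ (cyl r n b) := by
    rw [← h1, ← iUnion_cyl r n]
    exact measure_iUnion (disjoint_cyl r n) (fun b => measurableSet_cyl r n b)
  rw [tsum_fintype] at hsum
  have hsum' : (1 : ℝ≥0∞) = (RR r (n + 1) : ℝ≥0∞) * μ (cyl r n a) := by
    rw [hsum, Finset.sum_congr rfl (fun b _ => hEq b), Finset.sum_const, Finset.card_univ,
      ZMod.card, nsmul_eq_mul]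
  have hR0 : ((RR r (n + 1) : ℕ) : ℝ≥0∞) ≠ 0 := by
    exact_mod_cast (RRpos r (n + 1)).ne'
  have hRt : ((RR r (n + 1) : ℕ) : ℝ≥0∞) ≠ ⊤ := ENNReal.natCast_ne_top _
  calc μ (cyl r n a)
      = ((RR r (n + 1) : ℝ≥0∞))⁻¹ * ((RR r (n + 1) : ℝ≥0∞) * μ (cyl r n a)) := by
        rw [← mul_assoc, ENNReal.inv_mul_cancel hR0 hRt, one_mul]
  _ = ((RR r (n + 1) : ℝ≥0∞))⁻¹ := by rw [← hsum', mul_one]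

lemma exists_RR_inv_lt (c : ℝ≥0∞) (hc : c ≠ 0) :
    ∃ n : ℕ, ((RR r (n + 1) : ℝ≥0∞))⁻¹ < c := by
  obtain ⟨n, hn⟩ := ENNReal.exists_inv_two_pow_lt hc
  refine ⟨n, lt_of_le_of_lt ?_ hn⟩
  rw [← ENNReal.inv_pow]
  apply ENNReal.inv_le_inv'
  have hnat : 2 ^ n ≤ RR r (n + 1) :=
    le_trans (Nat.pow_le_pow_right two_pos (Nat.le_succ n)) (two_pow_le_RR r (n + 1))
  calc ((2 : ℝ≥0∞)) ^ n = ((2 ^ n : ℕ) : ℝ≥0∞) := by push_cast; ring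
  _ ≤ ((RR r (n + 1) : ℕ) : ℝ≥0∞) := by exact_mod_cast hnat

lemma haarY_cyl (n : ℕ) (a : ZMod (RR r (n + 1))) :
    haarY r (cyl r n a) = ((RR r (n + 1) : ℝ≥0∞))⁻¹ :=
  measure_cyl_eq r (haarY r) (haarY_univ r)
    (fun g n a => haarY_preimage r g (measurableSet_cyl r n a)) n a

lemma haarY_le_hausdorff : haarY r ≤ μH[1] := by
  apply Measure.le_hausdorffMeasure 1 _ ((RR r 1 : ℝ≥0∞))⁻¹
    (ENNReal.inv_pos.2 (ENNReal.natCast_ne_top _))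
  intro s hs
  rw [ENNReal.rpow_one]
  rcases s.eq_empty_or_nonempty with rfl | ⟨x, hx⟩
  · simp
  by_cases hd : EMetric.diam s = 0
  · have hsub : ∀ n : ℕ, s ⊆ cyl r n (x.1 n) := by
      intro n y hy
      have hsing : y = x := EMetric.diam_eq_zero_iff.1 hd hy hx
      show y.1 n = x.1 n
      rw [hsing]
    have hzero : haarY r s = 0 := by
      by_contra h0
      obtain ⟨n, hn⟩ := exists_RR_inv_lt r _ h0
      exact absurd (le_trans (measure_mono (hsub n)) (le_of_eq (haarY_cyl r n _)))
        (not_le.2 hn)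
    rw [hzero]
    exact zero_le
  · have hex : ∃ k, ¬ EMetric.diam s ≤ ((RR r (k + 1) : ℝ≥0∞))⁻¹ := by
      obtain ⟨k, hk⟩ := exists_RR_inv_lt r _ hd
      exact ⟨k, not_le.2 hk⟩
    have hN0 : Nat.find hex ≠ 0 := by
      intro h0
      exact (h0 ▸ Nat.find_spec hex) hs
    obtain ⟨m, hm⟩ := Nat.exists_eq_succ_of_ne_zero hN0
    have hPm : EMetric.diam s ≤ ((RR r (m + 1) : ℝ≥0∞))⁻¹ :=
      not_not.1 (Nat.find_min hex (by omega))
    have hNPm : ¬ EMetric.diam s ≤ ((RR r (m + 2) : ℝ≥0∞))⁻¹ := by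
      have h := Nat.find_spec hex
      rwa [hm] at h
    have hsub : s ⊆ cyl r m (x.1 m) := by
      intro y hy
      have hle : edist y x ≤ ((RR r (m + 1) : ℝ≥0∞))⁻¹ :=
        le_trans (EMetric.edist_le_diam_of_mem hy hx) hPm
      exact (edist_le_inv_iff r y x m).1 hle
    have h1 : haarY r s ≤ ((RR r (m + 1) : ℝ≥0∞))⁻¹ :=
      le_trans (measure_mono hsub) (le_of_eq (haarY_cyl r m _))
    have h2 : ((RR r (m + 1) : ℝ≥0∞))⁻¹ ≤ EMetric.diam s := by
      by_contra hlt
      push_neg at hlt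
      apply hNPm
      apply EMetric.diam_le
      intro u hu v hv
      have huv : edist u v < ((RR r (m + 1) : ℝ≥0∞))⁻¹ :=
        lt_of_le_of_lt (EMetric.edist_le_diam_of_mem hu hv) hlt
      rw [eRR_eq, edist_dist, ENNReal.ofReal_lt_ofReal_iff
        (inv_pos.mpr (by exact_mod_cast RRpos r (m + 1)))] at huv
      have hdd := dist_discrete r u v (m + 1) huv
      rw [eRR_eq, edist_dist]
      exact ENNReal.ofReal_le_ofReal hdd
    exact le_trans h1 h2

lemma RR_inv_tendsto :
    Filter.Tendsto (fun n : ℕ => ((RR r (n + 1) : ℝ≥0∞))⁻¹) Filter.atTop (nhds 0) := by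
  rw [← ENNReal.inv_top, ENNReal.tendsto_inv_iff]
  rw [ENNReal.tendsto_nhds_top_iff_nat]
  intro k
  rw [Filter.eventually_atTop]
  refine ⟨k, fun n hn => ?_⟩
  have hnat : k < RR r (n + 1) := by
    calc k ≤ n := hn
    _ < 2 ^ (n + 1) := Nat.lt_of_lt_of_le (Nat.lt_succ_self n) (Nat.lt_two_pow_self (n := n + 1)).le
    _ ≤ RR r (n + 1) := two_pow_le_RR r (n + 1)
  exact_mod_cast hnat

lemma hausdorff_univ : μH[1] (Set.univ : Set (Y0M r)) = 1 := by
  apply le_antisymm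
  · have h := Measure.hausdorffMeasure_le_liminf_sum 1 (Set.univ : Set (Y0M r))
      (fun n : ℕ => ((RR r (n + 1) : ℝ≥0∞))⁻¹) (RR_inv_tendsto r)
      (fun n a => cyl r n a)
      (Filter.Eventually.of_forall fun n a => diam_cyl_le r n a)
      (Filter.Eventually.of_forall fun n => (iUnion_cyl r n).symm.subset)
    refine le_trans h ?_
    have hb : ∀ n : ℕ,
        (∑ a : ZMod (RR r (n + 1)), EMetric.diam (cyl r n a) ^ (1 : ℝ)) ≤ 1 := by
      intro n
      haveI : NeZero (RR r (n + 1)) := instNeZeroRR r (n + 1)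
      have hsum : (∑ a : ZMod (RR r (n + 1)), EMetric.diam (cyl r n a) ^ (1 : ℝ)) ≤
          ∑ _a : ZMod (RR r (n + 1)), ((RR r (n + 1) : ℝ≥0∞))⁻¹ := by
        apply Finset.sum_le_sum
        intro a _
        rw [ENNReal.rpow_one]
        exact diam_cyl_le r n a
      refine le_trans hsum ?_
      rw [Finset.sum_const, Finset.card_univ, ZMod.card, nsmul_eq_mul]
      rw [ENNReal.mul_inv_cancel (by exact_mod_cast (RRpos r (n + 1)).ne')
        (ENNReal.natCast_ne_top _)]
    calc Filter.liminf
          (fun n : ℕ => ∑ a : ZMod (RR r (n + 1)), EMetric.diam (cyl r n a) ^ (1 : ℝ))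
          Filter.atTop
          ≤ Filter.liminf (fun _ : ℕ => (1 : ℝ≥0∞)) Filter.atTop :=
        Filter.liminf_le_liminf (Filter.Eventually.of_forall hb)
      _ = 1 := Filter.liminf_const 1
  · calc (1 : ℝ≥0∞) = haarY r Set.univ := (haarY_univ r).symm
    _ ≤ μH[1] (Set.univ : Set (Y0M r)) := Measure.le_iff'.1 (haarY_le_hausdorff r) _

lemma hausdorff_preimage_add (g : Y0M r) (E : Set (Y0M r)) :
    μH[1] ((fun y => Y0Madd r g y) ⁻¹' E) = μH[1] E :=
  (addLeftIso r g).hausdorffMeasure_preimage 1 E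

lemma hausdorff_cyl (n : ℕ) (a : ZMod (RR r (n + 1))) :
    μH[1] (cyl r n a) = ((RR r (n + 1) : ℝ≥0∞))⁻¹ :=
  measure_cyl_eq r μH[1] (hausdorff_univ r)
    (fun g n a => hausdorff_preimage_add r g (cyl r n a)) n a


/-! ### uniqueness via the π-system of cylinders -/

/-- the collection of all cylinders -/
def cylSets : Set (Set (Y0M r)) :=
  {s | ∃ n : ℕ, ∃ a : ZMod (RR r (n + 1)), s = cyl r n a}

lemma countable_cylSets : (cylSets r).Countable := by
  have h : cylSets r =
      Set.range (fun p : (Σ n : ℕ, ZMod (RR r (n + 1))) => cyl r p.1 p.2) := by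
    ext s
    constructor
    · rintro ⟨n, a, rfl⟩; exact ⟨⟨n, a⟩, rfl⟩
    · rintro ⟨⟨n, a⟩, rfl⟩; exact ⟨n, a, rfl⟩
  rw [h]
  exact Set.countable_range _

lemma cyl_inter_of_le {n m : ℕ} (h : n ≤ m) (a : ZMod (RR r (n + 1)))
    (b : ZMod (RR r (m + 1))) (hne : (cyl r n a ∩ cyl r m b).Nonempty) :
    cyl r n a ∩ cyl r m b = cyl r m b := by
  obtain ⟨x, hxa, hxb⟩ := hne
  apply Set.inter_eq_self_of_subset_right
  intro y hy
  have hyx : y.1 m = x.1 m := by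
    rw [(hy : y.1 m = b), ← (hxb : x.1 m = b)]
  show y.1 n = a
  rw [agree_of_le r y x h hyx]
  exact hxa

lemma isPiSystem_cylSets : IsPiSystem (cylSets r) := by
  rintro s ⟨n, a, rfl⟩ t ⟨m, b, rfl⟩ hne
  rcases le_total n m with h | h
  · rw [cyl_inter_of_le r h a b hne]
    exact ⟨m, b, rfl⟩
  · rw [Set.inter_comm] at hne ⊢
    rw [cyl_inter_of_le r h b a hne]
    exact ⟨n, a, rfl⟩

lemma measurable_eq_generateFrom :
    (instMeasY r : MeasurableSpace (Y0M r)) = MeasurableSpace.generateFrom (cylSets r) := by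
  apply le_antisymm
  · have hb : (instMeasY r : MeasurableSpace (Y0M r)) =
        MeasurableSpace.generateFrom {s : Set (Y0M r) | IsOpen s} := rfl
    rw [hb]
    apply MeasurableSpace.generateFrom_le
    intro u hu
    rw [Set.mem_setOf_eq] at hu
    have hdecomp : u = ⋃₀ {c | c ∈ cylSets r ∧ c ⊆ u} := by
      apply Set.Subset.antisymm
      · intro x hx
        obtain ⟨ε, hε, hball⟩ := Metric.isOpen_iff.1 hu x hx
        obtain ⟨n, hn⟩ := exists_RR_inv_lt_real r hε
        refine Set.mem_sUnion.2 ⟨cyl r n (x.1 n), ⟨⟨n, x.1 n, rfl⟩, ?_⟩, rfl⟩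
        intro y hy
        apply hball
        rw [Metric.mem_ball]
        exact lt_of_le_of_lt ((dist_le_inv_iff r y x n).2 (hy : y.1 n = x.1 n)) hn
      · intro x hx
        obtain ⟨c, ⟨_, hcu⟩, hxc⟩ := hx
        exact hcu hxc
    rw [hdecomp]
    apply MeasurableSet.sUnion ((countable_cylSets r).mono (fun c hc => hc.1))
    intro c hc
    exact MeasurableSpace.measurableSet_generateFrom hc.1
  · apply MeasurableSpace.generateFrom_le
    rintro s ⟨n, a, rfl⟩
    exact (isOpen_cyl r n a).measurableSet

lemma measure_eq_hausdorff (μ₀ : Measure (Y0M r)) (h1 : μ₀ Set.univ = 1)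
    (hinv : ∀ g : Y0M r, ∀ E : Set (Y0M r), MeasurableSet E →
      μ₀ ((fun y => Y0Madd r g y) ⁻¹' E) = μ₀ E) :
    μ₀ = μH[1] := by
  haveI : IsFiniteMeasure μ₀ := ⟨by rw [h1]; exact ENNReal.one_lt_top⟩
  apply MeasureTheory.ext_of_generate_finite (cylSets r) (measurable_eq_generateFrom r)
    (isPiSystem_cylSets r) ?_ (by rw [h1, hausdorff_univ r])
  rintro s ⟨n, a, rfl⟩
  rw [measure_cyl_eq r μ₀ h1 (fun g n a => hinv g _ (measurableSet_cyl r n a)) n a,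
    hausdorff_cyl r n a]

end Stmt15

open MeasureTheory in
/-- With respect to the restriction of `ρ` to `Y₀`, the one-dimensional Hausdorff measure
satisfies `H¹(Y_n) = 1/R_n` for all `n ≥ 0` (`Y_0 = Y₀`, and `Y_n = {x ∈ Y₀ : x_n = 0}` for
`n ≥ 1`); consequently, any translation-invariant Borel probability measure `μ₀` on `Y₀`
(so, the normalized Haar measure) coincides with `H¹` on the Borel sets. -/
theorem stmt_15 (r : ℕ → ℕ) (hr : ∀ j, 2 ≤ r j) :
    letI : MetricSpace (Y0M r) :=
      MetricSpace.induced (Y0Mval r) (Y0Mval_injective r)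
        (metricX0R r fun j => lt_of_lt_of_le two_pos (hr j))
    letI : MeasurableSpace (Y0M r) := borel _
    haveI : BorelSpace (Y0M r) := ⟨rfl⟩
    (μH[1] (Set.univ : Set (Y0M r)) = 1) ∧
    (∀ n : ℕ, μH[1] {x : Y0M r | Y0Mval r x n = 0} = ((RR r (n + 1) : ENNReal))⁻¹) ∧
    (∀ μ₀ : Measure (Y0M r), μ₀ Set.univ = 1 →
      (∀ g : Y0M r, ∀ E : Set (Y0M r),
        MeasurableSet E → μ₀ ((fun y => Y0Madd r g y) ⁻¹' E) = μ₀ E) →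
      ∀ E : Set (Y0M r), MeasurableSet E → μ₀ E = μH[1] E) := by
  haveI : Fact (∀ j, 2 ≤ r j) := ⟨hr⟩
  refine ⟨Stmt15.hausdorff_univ r, fun n => Stmt15.hausdorff_cyl r n 0, ?_⟩
  intro μ₀ h1 hinv E hE
  rw [Stmt15.measure_eq_hausdorff r μ₀ h1 hinv]
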